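/- For any Q ≥ 0 and any L₁, L₂ > 0, the wave number α minimizing R(α) = ((π² + α²)/α²)·((π² + α²)² + Qπ²) over the set of admissible wave numbers {√(j²π²/L₁² + k²π²/L₂²) : j,k ∈ ℤ≥0, j²+k² ≠ 0} satisfies α ≥ π/(2^{1/3}(2^{2/3}+1)^{1/2}). -/
import Mathlib


open Real

theorem stmt_4 (Q L₁ L₂ : ℝ) (hQ : 0 ≤ Q) (hL₁ : 0 < L₁) (hL₂ : 0 < L₂)
    (A : Set ℝ)
    (hA : A = {a : ℝ | ∃ j k : ℕ, j^2 + k^2 ≠ 0 ∧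
      a = Real.sqrt ((j:ℝ)^2*π^2/L₁^2 + (k:ℝ)^2*π^2/L₂^2)})
    (α : ℝ) (hα : α ∈ A)
    (hmin : ∀ a ∈ A,
      ((π^2 + α^2)/α^2) * ((π^2 + α^2)^2 + Q*π^2)
        ≤ ((π^2 + a^2)/a^2) * ((π^2 + a^2)^2 + Q*π^2)) :
    α ≥ π / ((2:ℝ)^((1:ℝ)/3) * ((2:ℝ)^((2:ℝ)/3) + 1)^((1:ℝ)/2)) := by
  have hπ : 0 < π := Real.pi_pos
  subst hA
  obtain ⟨j, k, hjk, hαeq⟩ := hα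
  have hjk' : j ≠ 0 ∨ k ≠ 0 := by
    by_contra h
    push_neg at h
    simp [h.1, h.2] at hjk
  set S : ℝ := (j:ℝ)^2*π^2/L₁^2 + (k:ℝ)^2*π^2/L₂^2 with hS
  have hSpos : 0 < S := by
    rcases hjk' with h | h
    · have hj : (j:ℝ) ≠ 0 := Nat.cast_ne_zero.mpr h
      have h1 : 0 < (j:ℝ)^2*π^2/L₁^2 := by positivity
      have h2 : 0 ≤ (k:ℝ)^2*π^2/L₂^2 := by positivity
      rw [hS]; linarith
    · have hk : (k:ℝ) ≠ 0 := Nat.cast_ne_zero.mpr h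
      have h1 : 0 ≤ (j:ℝ)^2*π^2/L₁^2 := by positivity
      have h2 : 0 < (k:ℝ)^2*π^2/L₂^2 := by positivity
      rw [hS]; linarith
  have hαpos : 0 < α := by rw [hαeq]; exact Real.sqrt_pos.mpr hSpos
  have hα2 : α^2 = S := by rw [hαeq]; exact Real.sq_sqrt hSpos.le
  -- 2α is admissible
  have h2mem : 2*α ∈ {a : ℝ | ∃ j k : ℕ, j^2 + k^2 ≠ 0 ∧
      a = Real.sqrt ((j:ℝ)^2*π^2/L₁^2 + (k:ℝ)^2*π^2/L₂^2)} := by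
    refine ⟨2*j, 2*k, ?_, ?_⟩
    · rcases hjk' with h | h
      · intro hc
        have : (2*j)^2 ≠ 0 := pow_ne_zero _ (by omega)
        omega
      · intro hc
        have : (2*k)^2 ≠ 0 := pow_ne_zero _ (by omega)
        omega
    · have hinner : ((2*j:ℕ):ℝ)^2*π^2/L₁^2 + ((2*k:ℕ):ℝ)^2*π^2/L₂^2 = 2^2 * S := by
        push_cast
        rw [hS]
        ring
      rw [hinner, Real.sqrt_mul (by norm_num : (0:ℝ) ≤ 2^2),
        Real.sqrt_sq (by norm_num : (0:ℝ) ≤ 2), ← hαeq]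
  have key := hmin (2*α) h2mem
  set p : ℝ := π^2 with hp
  have hppos : 0 < p := by positivity
  set x : ℝ := α^2 with hx
  have hxpos : 0 < x := by positivity
  have h2α2 : (2*α)^2 = 4*x := by rw [hx]; ring
  rw [h2α2] at key
  -- clear denominators
  have key' : 4*(p+x)*((p+x)^2+Q*p) ≤ (p+4*x)*((p+4*x)^2+Q*p) := by
    rw [div_mul_eq_mul_div, div_mul_eq_mul_div,
      div_le_div_iff₀ hxpos (by linarith : (0:ℝ) < 4*x)] at key
    nlinarith [key]
  have hcube : 4*(p+x)^3 ≤ (p+4*x)^3 := by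
    nlinarith [mul_nonneg hQ hppos.le, key']
  set c : ℝ := (2:ℝ)^((2:ℝ)/3) with hc
  have hc3 : c^3 = 4 := by
    rw [hc, ← Real.rpow_natCast ((2:ℝ)^((2:ℝ)/3)) 3,
      ← Real.rpow_mul (by norm_num : (0:ℝ) ≤ 2)]
    norm_num
  have hc1 : 1 < c := by
    rw [hc]
    exact Real.one_lt_rpow_iff_of_pos (by norm_num) |>.mpr
      (Or.inl ⟨by norm_num, by norm_num⟩)
  have hcpos : 0 < c := by linarith
  have h4 : c*(p+x) ≤ p+4*x := by
    have hcb : (c*(p+x))^3 ≤ (p+4*x)^3 := by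
      have : (c*(p+x))^3 = c^3*(p+x)^3 := by ring
      rw [this, hc3]
      exact hcube
    exact le_of_pow_le_pow_left₀ (by norm_num) (by linarith) hcb
  have h5 : p ≤ c*(c+1)*x := by
    have h45 : (c-1)*p ≤ (c-1)*(c*(c+1)*x) := by nlinarith [h4, hc3]
    exact le_of_mul_le_mul_left h45 (by linarith)
  -- final computation
  set d : ℝ := (2:ℝ)^((1:ℝ)/3) * ((2:ℝ)^((2:ℝ)/3) + 1)^((1:ℝ)/2) with hd
  have hdpos : 0 < d := by
    rw [hd]
    positivity
  have hd2 : d^2 = c*(c+1) := by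
    rw [hd]
    have e1 : ((2:ℝ)^((1:ℝ)/3))^2 = c := by
      rw [hc, ← Real.rpow_natCast ((2:ℝ)^((1:ℝ)/3)) 2,
        ← Real.rpow_mul (by norm_num : (0:ℝ) ≤ 2)]
      norm_num
    have e2 : (((2:ℝ)^((2:ℝ)/3) + 1)^((1:ℝ)/2))^2 = c+1 := by
      rw [← hc, ← Real.rpow_natCast ((c+1)^((1:ℝ)/2)) 2,
        ← Real.rpow_mul (by linarith : (0:ℝ) ≤ c+1)]
      norm_num
    rw [mul_pow, e1, e2]
  have hfin : (π/d)^2 ≤ α^2 := by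
    rw [div_pow, hd2, div_le_iff₀ (by positivity)]
    calc π^2 = p := hp.symm
    _ ≤ c*(c+1)*x := h5
    _ = α^2 * (c*(c+1)) := by rw [hx]; ring
  have := le_of_pow_le_pow_left₀ (n := 2) (by norm_num) hαpos.le hfin
  linarith [this]
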